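/- Every 3-way (v,3,2) Steiner trade of volume 6 contains an element x of found(T) with r_x = 2, i.e., x lies in exactly two blocks of each collection. -/
import Mathlib


/-- The blocks of a collection `Ti` that contain a given subset `S`. -/
def blocksContaining (Ti : Finset (Finset ℕ)) (S : Finset ℕ) : Finset (Finset ℕ) :=
  Ti.filter (fun B => S ⊆ B)

/-- `T` is a μ-way (v,k,t) trade of volume `m` with point set `V`:
μ pairwise disjoint collections, each of `m` k-subsets of the v-set `V`,
such that every t-subset of `V` is contained in the same number of blocks
of each collection. -/
structure IsTrade (μ v k t m : ℕ) (V : Finset ℕ) (T : Fin μ → Finset (Finset ℕ)) : Prop where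
  cardV : V.card = v
  volume : ∀ i, (T i).card = m
  blockSub : ∀ i, ∀ B ∈ T i, B ⊆ V
  blockCard : ∀ i, ∀ B ∈ T i, B.card = k
  disj : ∀ i j, i ≠ j → Disjoint (T i) (T j)
  balanced : ∀ S : Finset ℕ, S.card = t → ∀ i j,
    (blocksContaining (T i) S).card = (blocksContaining (T j) S).card

/-- A μ-way (v,k,t) Steiner trade: a trade in which every t-subset occurs
at most once in each collection. -/
def IsSteinerTrade (μ v k t m : ℕ) (V : Finset ℕ) (T : Fin μ → Finset (Finset ℕ)) : Prop :=
  IsTrade μ v k t m V T ∧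
  ∀ S : Finset ℕ, S.card = t → ∀ i, (blocksContaining (T i) S).card ≤ 1

/-- The foundation of a μ-way trade: the union of all its blocks. -/
def foundation {μ : ℕ} (T : Fin μ → Finset (Finset ℕ)) : Finset ℕ :=
  Finset.univ.biUnion (fun i => (T i).biUnion id)

/-- `T` is t-solely balanced: no two distinct collections contain a common
(t+1)-subset. -/
def SolelyBalanced {μ : ℕ} (t : ℕ) (T : Fin μ → Finset (Finset ℕ)) : Prop :=
  ∀ i j : Fin μ, i ≠ j → ∀ S : Finset ℕ, S.card = t + 1 →
    ¬ ((∃ B ∈ T i, S ⊆ B) ∧ (∃ B ∈ T j, S ⊆ B))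

variable {v : ℕ} {V : Finset ℕ} {T : Fin 3 → Finset (Finset ℕ)}

lemma block_sub_foundation {μ : ℕ} {T : Fin μ → Finset (Finset ℕ)} {i : Fin μ}
    {B : Finset ℕ} (hB : B ∈ T i) : B ⊆ foundation T := fun x hx =>
  Finset.mem_biUnion.mpr ⟨i, Finset.mem_univ _, Finset.mem_biUnion.mpr ⟨B, hB, hx⟩⟩

lemma exists_block (hT : IsSteinerTrade 3 v 3 2 6 V T) {x : ℕ}
    (hx : x ∈ foundation T) (j : Fin 3) : ∃ B ∈ T j, x ∈ B := by
  obtain ⟨i, -, hi⟩ := Finset.mem_biUnion.mp hx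
  obtain ⟨B, hB, hxB⟩ := Finset.mem_biUnion.mp hi
  simp only [id] at hxB
  have hcard := hT.1.blockCard i B hB
  obtain ⟨y, hyB, hyx⟩ := Finset.exists_mem_ne (by rw [hcard]; norm_num) x
  have hsub : ({x, y} : Finset ℕ) ⊆ B := by
    intro z hz
    rcases Finset.mem_insert.mp hz with rfl | hz
    · exact hxB
    · exact (Finset.mem_singleton.mp hz) ▸ hyB
  have h2 : ({x, y} : Finset ℕ).card = 2 := Finset.card_pair (Ne.symm hyx)
  have hb := hT.1.balanced {x, y} h2 i j
  have hmem : B ∈ blocksContaining (T i) {x, y} := Finset.mem_filter.mpr ⟨hB, hsub⟩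
  have hpos : 0 < (blocksContaining (T j) {x, y}).card := by
    rw [← hb]; exact Finset.card_pos.mpr ⟨B, hmem⟩
  obtain ⟨B', hB'⟩ := Finset.card_pos.mp hpos
  rw [blocksContaining, Finset.mem_filter] at hB'
  exact ⟨B', hB'.1, hB'.2 (by simp)⟩

lemma two_le_r (hT : IsSteinerTrade 3 v 3 2 6 V T) {x : ℕ} (hx : x ∈ foundation T) :
    2 ≤ (blocksContaining (T 0) {x}).card := by
  obtain ⟨B, hB, hxB⟩ := exists_block hT hx 1
  have hcard := hT.1.blockCard 1 B hB
  have herase : (B.erase x).card = 2 := by rw [Finset.card_erase_of_mem hxB, hcard]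
  obtain ⟨a, b, hab, habeq⟩ := Finset.card_eq_two.mp herase
  have haB : a ∈ B.erase x := habeq ▸ (by simp)
  have hbB : b ∈ B.erase x := habeq ▸ (by simp)
  have hax : a ≠ x := Finset.ne_of_mem_erase haB
  have hbx : b ≠ x := Finset.ne_of_mem_erase hbB
  have haB' : a ∈ B := Finset.mem_of_mem_erase haB
  have hbB' : b ∈ B := Finset.mem_of_mem_erase hbB
  have getC : ∀ c, c ∈ B → c ≠ x → ∃ C ∈ T 0, x ∈ C ∧ c ∈ C := by
    intro c hcB hcx
    have hsub : ({x, c} : Finset ℕ) ⊆ B := by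
      intro z hz
      rcases Finset.mem_insert.mp hz with rfl | hz
      · exact hxB
      · exact (Finset.mem_singleton.mp hz) ▸ hcB
    have h2 : ({x, c} : Finset ℕ).card = 2 := Finset.card_pair (Ne.symm hcx)
    have hb := hT.1.balanced {x, c} h2 1 0
    have hmem : B ∈ blocksContaining (T 1) {x, c} := Finset.mem_filter.mpr ⟨hB, hsub⟩
    have hpos : 0 < (blocksContaining (T 0) {x, c}).card := by
      rw [← hb]; exact Finset.card_pos.mpr ⟨B, hmem⟩
    obtain ⟨C, hC⟩ := Finset.card_pos.mp hpos
    rw [blocksContaining, Finset.mem_filter] at hC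
    exact ⟨C, hC.1, hC.2 (by simp), hC.2 (by simp)⟩
  obtain ⟨Ca, hCa, hxCa, haCa⟩ := getC a haB' hax
  obtain ⟨Cb, hCb, hxCb, hbCb⟩ := getC b hbB' hbx
  have hne : Ca ≠ Cb := by
    intro heq
    subst heq
    have hBsub : B ⊆ Ca := by
      have hB' : B = insert x (B.erase x) := (Finset.insert_erase hxB).symm
      rw [hB', habeq]
      intro z hz
      rcases Finset.mem_insert.mp hz with rfl | hz
      · exact hxCa
      · rcases Finset.mem_insert.mp hz with rfl | hz
        · exact haCa
        · exact (Finset.mem_singleton.mp hz) ▸ hbCb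
    have hBeq : B = Ca := Finset.eq_of_subset_of_card_le hBsub
      (by rw [hT.1.blockCard 0 Ca hCa, hcard])
    exact (Finset.disjoint_left.mp (hT.1.disj 0 1 (by decide)) (hBeq ▸ hCa)) hB
  have hsub2 : ({Ca, Cb} : Finset (Finset ℕ)) ⊆ blocksContaining (T 0) {x} := by
    intro C hC
    rcases Finset.mem_insert.mp hC with rfl | hC
    · exact Finset.mem_filter.mpr ⟨hCa, Finset.singleton_subset_iff.mpr hxCa⟩
    · rw [Finset.mem_singleton.mp hC]
      exact Finset.mem_filter.mpr ⟨hCb, Finset.singleton_subset_iff.mpr hxCb⟩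
  calc 2 = ({Ca, Cb} : Finset (Finset ℕ)).card := (Finset.card_pair hne).symm
    _ ≤ _ := Finset.card_le_card hsub2

lemma sum_r (hT : IsSteinerTrade 3 v 3 2 6 V T) :
    ∑ x ∈ foundation T, (blocksContaining (T 0) {x}).card = 18 := by
  have hconv : ∀ x : ℕ, blocksContaining (T 0) {x} = (T 0).filter (fun B => x ∈ B) := by
    intro x; simp [blocksContaining, Finset.singleton_subset_iff]
  simp_rw [hconv, Finset.card_filter]
  rw [Finset.sum_comm]
  have hstep : ∀ B ∈ T 0, (∑ x ∈ foundation T, if x ∈ B then 1 else 0) = 3 := by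
    intro B hB
    rw [← Finset.card_filter]
    have : (foundation T).filter (fun x => x ∈ B) = B := by
      ext z
      simp only [Finset.mem_filter]
      exact ⟨fun h => h.2, fun h => ⟨block_sub_foundation hB h, h⟩⟩
    rw [this, hT.1.blockCard 0 B hB]
  rw [Finset.sum_congr rfl hstep, Finset.sum_const, hT.1.volume 0]; rfl

lemma found_ge (hT : IsSteinerTrade 3 v 3 2 6 V T) : 7 ≤ (foundation T).card := by
  have hdisj : ∀ B1 ∈ T 0, ∀ B2 ∈ T 0, B1 ≠ B2 →
      Disjoint (Finset.powersetCard 2 B1) (Finset.powersetCard 2 B2) := by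
    intro B1 h1 B2 h2 hne
    rw [Finset.disjoint_left]
    intro S hS1 hS2
    rw [Finset.mem_powersetCard] at hS1 hS2
    have hst := hT.2 S hS1.2 0
    have hsub : ({B1, B2} : Finset (Finset ℕ)) ⊆ blocksContaining (T 0) S := by
      intro C hC
      rcases Finset.mem_insert.mp hC with rfl | hC
      · exact Finset.mem_filter.mpr ⟨h1, hS1.1⟩
      · rw [Finset.mem_singleton.mp hC]
        exact Finset.mem_filter.mpr ⟨h2, hS2.1⟩
    have := Finset.card_le_card hsub
    rw [Finset.card_pair hne] at this
    omega
  have hcardP : ((T 0).biUnion (fun B => Finset.powersetCard 2 B)).card = 18 := by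
    rw [Finset.card_biUnion hdisj]
    have hpc : ∀ B ∈ T 0, (Finset.powersetCard 2 B).card = 3 := by
      intro B hB
      rw [Finset.card_powersetCard, hT.1.blockCard 0 B hB]; rfl
    rw [Finset.sum_congr rfl hpc, Finset.sum_const, hT.1.volume 0]; rfl
  have hPsub : (T 0).biUnion (fun B => Finset.powersetCard 2 B)
      ⊆ Finset.powersetCard 2 (foundation T) := by
    intro S hS
    obtain ⟨B, hB, hSB⟩ := Finset.mem_biUnion.mp hS
    rw [Finset.mem_powersetCard] at hSB ⊢
    exact ⟨hSB.1.trans (block_sub_foundation hB), hSB.2⟩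
  have hle := Finset.card_le_card hPsub
  rw [hcardP, Finset.card_powersetCard] at hle
  by_contra h
  push_neg at h
  have hmono : (foundation T).card.choose 2 ≤ Nat.choose 6 2 :=
    Nat.choose_le_choose 2 (by omega)
  have : Nat.choose 6 2 = 15 := by decide
  omega

/-- Every 3-way (v,3,2) Steiner trade of volume 6 contains an element x of its
foundation lying in exactly two blocks of each collection. -/
theorem volume_six_has_rx_two (v : ℕ) (V : Finset ℕ)
    (T : Fin 3 → Finset (Finset ℕ)) (hT : IsSteinerTrade 3 v 3 2 6 V T) :
    ∃ x ∈ foundation T, (blocksContaining (T 0) {x}).card = 2 := by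
  by_contra h
  push_neg at h
  have h3 : ∀ x ∈ foundation T, 3 ≤ (blocksContaining (T 0) {x}).card := by
    intro x hx
    have h2 := two_le_r hT hx
    have hne := h x hx
    omega
  have hsum := Finset.sum_le_sum h3
  rw [sum_r hT] at hsum
  rw [Finset.sum_const, smul_eq_mul] at hsum
  have hf := found_ge hT
  omega
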